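/- For m×n complex matrices A and B and indices i, j ≥ 1 with i + j − 1 ≤ min(m,n), the singular value inequality σ_{i+j−1}(A+B) ≤ σ_i(A) + σ_j(B) holds. -/

import Mathlib

open Matrix BigOperators Kronecker
open scoped ComplexOrder

/-- The rank-one projector `|v⟩⟨v|`. -/
noncomputable def dyad {α : Type*} [Fintype α] (v : α → ℂ) : Matrix α α ℂ :=
  Matrix.vecMulVec v (star v)

/-- Partial trace over the second tensor factor. -/
noncomputable def ptraceB {m n : ℕ} (ρ : Matrix (Fin m × Fin n) (Fin m × Fin n) ℂ) :
    Matrix (Fin m) (Fin m) ℂ := fun i j => ∑ k : Fin n, ρ (i, k) (j, k)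

/-- Partial trace over the first tensor factor. -/
noncomputable def ptraceA {m n : ℕ} (ρ : Matrix (Fin m × Fin n) (Fin m × Fin n) ℂ) :
    Matrix (Fin n) (Fin n) ℂ := fun i j => ∑ k : Fin m, ρ (k, i) (k, j)

/-- A bipartite state is separable if it is a finite convex combination of
tensor products of density matrices. -/
def SepState {m n : ℕ} (ρ : Matrix (Fin m × Fin n) (Fin m × Fin n) ℂ) : Prop :=
  ∃ (d : ℕ) (q : Fin d → ℝ) (σ : Fin d → Matrix (Fin m) (Fin m) ℂ)
    (τ : Fin d → Matrix (Fin n) (Fin n) ℂ),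
    (∀ i, 0 ≤ q i) ∧ (∑ i, q i = 1) ∧
    (∀ i, (σ i).PosSemidef ∧ (σ i).trace = 1) ∧
    (∀ i, (τ i).PosSemidef ∧ (τ i).trace = 1) ∧
    ρ = ∑ i, (q i : ℂ) • (σ i ⊗ₖ τ i)

open Classical in
/-- Eigenvalues of a Hermitian matrix arranged in non-increasing order
(`eigsDesc A 0` is the largest eigenvalue); junk value otherwise. -/
noncomputable def eigsDesc {k : ℕ} (A : Matrix (Fin k) (Fin k) ℂ) : Fin k → ℝ :=
  if h : A.IsHermitian then fun i => (h.eigenvalues ∘ Tuple.sort h.eigenvalues) i.rev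
  else fun _ => 0

/-- The `i`-th largest singular value of an `m × n` complex matrix,
`i : Fin (min m n)`. -/
noncomputable def singVal {m n : ℕ} (A : Matrix (Fin m) (Fin n) ℂ) (i : Fin (min m n)) : ℝ :=
  Real.sqrt (eigsDesc (Aᴴ * A) (Fin.castLE (min_le_right m n) i))

open Classical in
/-- The largest eigenvalue of a Hermitian matrix; junk value otherwise. -/
noncomputable def lamMax {α : Type*} [Fintype α] [DecidableEq α] (A : Matrix α α ℂ) : ℝ :=
  if h : A.IsHermitian then ⨆ i, h.eigenvalues i else 0

/-- Frobenius (Hilbert–Schmidt) norm of a matrix. -/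
noncomputable def frobNorm {m n : ℕ} (A : Matrix (Fin m) (Fin n) ℂ) : ℝ :=
  Real.sqrt ((Aᴴ * A).trace.re)

section WeylHelpers
open scoped InnerProductSpace

section helpers
variable {n : ℕ} {H : Matrix (Fin n) (Fin n) ℂ}

noncomputable def sperm (hH : H.IsHermitian) : Equiv.Perm (Fin n) :=
  (Fin.revPerm).trans (Tuple.sort hH.eigenvalues)

lemma eigsDesc_eq (hH : H.IsHermitian) (t : Fin n) :
    eigsDesc H t = hH.eigenvalues (sperm hH t) := by
  unfold eigsDesc
  rw [dif_pos hH]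
  rfl

lemma eigsDesc_antitone (hH : H.IsHermitian) : Antitone (eigsDesc H) := by
  intro s t hst
  rw [eigsDesc_eq hH, eigsDesc_eq hH]
  exact Tuple.monotone_sort hH.eigenvalues (Fin.rev_le_rev.mpr hst)

noncomputable def obasis (hH : H.IsHermitian) :
    OrthonormalBasis (Fin n) ℂ (EuclideanSpace ℂ (Fin n)) :=
  hH.eigenvectorBasis.reindex (sperm hH).symm

lemma mulVec_obasis (hH : H.IsHermitian) (t : Fin n) :
    H *ᵥ ⇑(obasis hH t) = eigsDesc H t • ⇑(obasis hH t) := by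
  rw [eigsDesc_eq hH]
  simpa [obasis] using hH.mulVec_eigenvectorBasis (sperm hH t)

end helpers

noncomputable def toE {n : ℕ} (v : Fin n → ℂ) : EuclideanSpace ℂ (Fin n) := WithLp.toLp 2 v

variable {n : ℕ} {H : Matrix (Fin n) (Fin n) ℂ}

lemma inner_toE (x y : EuclideanSpace ℂ (Fin n)) (v : Fin n → ℂ) (hv : y = toE v) :
    ⟪x, y⟫_ℂ = star (x : Fin n → ℂ) ⬝ᵥ v := by subst hv; rw [EuclideanSpace.inner_eq_star_dotProduct, dotProduct_comm]; rfl

lemma inner_mulVec_left (M : Matrix (Fin n) (Fin n) ℂ) (hM : M.IsHermitian)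
    (v x : EuclideanSpace ℂ (Fin n)) :
    ⟪v, toE (M *ᵥ x)⟫_ℂ = ⟪toE (M *ᵥ (v : Fin n → ℂ)), x⟫_ℂ := by
  simp only [EuclideanSpace.inner_eq_star_dotProduct, dotProduct_comm _ (star _)]
  show star (v : Fin n → ℂ) ⬝ᵥ (M *ᵥ x) = star (M *ᵥ (v : Fin n → ℂ)) ⬝ᵥ (x : Fin n → ℂ)
  rw [star_mulVec, hM.eq, ← dotProduct_mulVec]

-- norm squared of mulVec via the Gram matrix
lemma normsq_mulVec (m : ℕ) (A : Matrix (Fin m) (Fin n) ℂ) (x : EuclideanSpace ℂ (Fin n)) :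
    ‖toE (A *ᵥ (x : Fin n → ℂ))‖ ^ 2
      = Complex.re ⟪x, toE ((Aᴴ * A) *ᵥ (x : Fin n → ℂ))⟫_ℂ := by
  have h1 : ⟪x, toE ((Aᴴ * A) *ᵥ (x : Fin n → ℂ))⟫_ℂ
      = ⟪toE (A *ᵥ (x : Fin n → ℂ)), toE (A *ᵥ (x : Fin n → ℂ))⟫_ℂ := by
    simp only [EuclideanSpace.inner_eq_star_dotProduct, dotProduct_comm _ (star _)]
    show star (x : Fin n → ℂ) ⬝ᵥ ((Aᴴ * A) *ᵥ (x : Fin n → ℂ))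
        = star (A *ᵥ (x : Fin n → ℂ)) ⬝ᵥ (A *ᵥ (x : Fin n → ℂ))
    rw [star_mulVec, ← Matrix.mulVec_mulVec, ← dotProduct_mulVec]
  rw [h1, ← inner_self_eq_norm_sq (𝕜 := ℂ)]
  rfl

-- Rayleigh formula
lemma rayleigh_eq (hH : H.IsHermitian) (x : EuclideanSpace ℂ (Fin n)) :
    Complex.re ⟪x, toE (H *ᵥ (x : Fin n → ℂ))⟫_ℂ
      = ∑ t, eigsDesc H t * ‖⟪(obasis hH t : EuclideanSpace ℂ (Fin n)), x⟫_ℂ‖ ^ 2 := by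
  set b := obasis hH
  have key : ⟪x, toE (H *ᵥ (x : Fin n → ℂ))⟫_ℂ
      = ∑ t, (eigsDesc H t : ℂ) * (⟪x, b t⟫_ℂ * ⟪b t, x⟫_ℂ) := by
    calc ⟪x, toE (H *ᵥ (x : Fin n → ℂ))⟫_ℂ
        = ∑ t, ⟪x, b t⟫_ℂ * ⟪b t, toE (H *ᵥ (x : Fin n → ℂ))⟫_ℂ :=
          (b.sum_inner_mul_inner x _).symm
      _ = ∑ t, (eigsDesc H t : ℂ) * (⟪x, b t⟫_ℂ * ⟪b t, x⟫_ℂ) := by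
          refine Finset.sum_congr rfl fun t _ => ?_
          rw [inner_mulVec_left H hH (b t) x]
          have : toE (H *ᵥ ((b t : EuclideanSpace ℂ (Fin n)) : Fin n → ℂ))
              = (eigsDesc H t : ℂ) • (b t : EuclideanSpace ℂ (Fin n)) := by
            have := mulVec_obasis hH t
            ext i
            have h2 := congrFun this i
            simpa [toE] using h2
          rw [this, inner_smul_left]
          ring_nf
          rw [Complex.conj_ofReal]
          ring
  rw [key]
  rw [Complex.re_sum]
  refine Finset.sum_congr rfl fun t _ => ?_
  have h3 : ⟪x, b t⟫_ℂ = starRingEnd ℂ ⟪b t, x⟫_ℂ := by rw [← inner_conj_symm]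
  rw [h3, mul_comm (starRingEnd ℂ _) _, Complex.mul_conj, ← Complex.ofReal_mul,
    Complex.ofReal_re]
  congr 1
  rw [Complex.normSq_eq_norm_sq]

lemma normsq_eq_sum_ob (b : OrthonormalBasis (Fin n) ℂ (EuclideanSpace ℂ (Fin n)))
    (x : EuclideanSpace ℂ (Fin n)) :
    ‖x‖ ^ 2 = ∑ t, ‖⟪(b t : EuclideanSpace ℂ (Fin n)), x⟫_ℂ‖ ^ 2 := by
  have := b.sum_inner_mul_inner x x
  have h2 : Complex.re ⟪x, x⟫_ℂ = ‖x‖ ^ 2 := inner_self_eq_norm_sq (𝕜 := ℂ) x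
  rw [← h2, ← this, Complex.re_sum]
  refine Finset.sum_congr rfl fun t _ => ?_
  have h3 : ⟪x, b t⟫_ℂ = starRingEnd ℂ ⟪b t, x⟫_ℂ := by rw [← inner_conj_symm]
  rw [h3, mul_comm (starRingEnd ℂ _) _, Complex.mul_conj, Complex.ofReal_re,
    Complex.normSq_eq_norm_sq]

-- vanishing of coefficients outside the span window
lemma inner_eq_zero_of_mem_span (b : OrthonormalBasis (Fin n) ℂ (EuclideanSpace ℂ (Fin n)))
    (s : Finset (Fin n)) (x : EuclideanSpace ℂ (Fin n))
    (hx : x ∈ Submodule.span ℂ (b '' ↑s)) {t : Fin n} (ht : t ∉ s) :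
    ⟪(b t : EuclideanSpace ℂ (Fin n)), x⟫_ℂ = 0 := by
  have hle : Submodule.span ℂ (b '' ↑s) ≤ (ℂ ∙ (b t : EuclideanSpace ℂ (Fin n)))ᗮ := by
    rw [Submodule.span_le]
    rintro _ ⟨u, hu, rfl⟩
    rw [SetLike.mem_coe, Submodule.mem_orthogonal_singleton_iff_inner_right]
    exact b.orthonormal.2 (fun h => ht (h ▸ hu))
  exact Submodule.mem_orthogonal_singleton_iff_inner_right.mp (hle hx)

-- dimension of the span window
lemma finrank_span_window (b : OrthonormalBasis (Fin n) ℂ (EuclideanSpace ℂ (Fin n)))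
    (s : Finset (Fin n)) :
    Module.finrank ℂ (Submodule.span ℂ (b '' (↑s : Set (Fin n)))) = s.card := by
  classical
  have hli : LinearIndependent ℂ ((↑) : (b '' ↑s) → EuclideanSpace ℂ (Fin n)) :=
    ((linearIndepOn_id_range_iff b.orthonormal.linearIndependent.injective).mpr b.orthonormal.linearIndependent).mono (Set.image_subset_range _ _)
  rw [finrank_span_set_eq_card hli]
  rw [Set.toFinset_image, Finset.card_image_of_injective _ b.orthonormal.linearIndependent.injective, Finset.toFinset_coe]

lemma rayleigh_le_window (hH : H.IsHermitian) (k : Fin n) (x : EuclideanSpace ℂ (Fin n))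
    (hx : x ∈ Submodule.span ℂ (obasis hH '' ↑(Finset.Ici k))) :
    Complex.re ⟪x, toE (H *ᵥ (x : Fin n → ℂ))⟫_ℂ ≤ eigsDesc H k * ‖x‖ ^ 2 := by
  rw [rayleigh_eq hH, normsq_eq_sum_ob (obasis hH), Finset.mul_sum]
  refine Finset.sum_le_sum fun t _ => ?_
  by_cases ht : t ∈ Finset.Ici k
  · exact mul_le_mul_of_nonneg_right (eigsDesc_antitone hH (Finset.mem_Ici.mp ht))
      (sq_nonneg _)
  · rw [inner_eq_zero_of_mem_span (obasis hH) _ x hx ht]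
    simp

lemma rayleigh_ge_window (hH : H.IsHermitian) (k : Fin n) (x : EuclideanSpace ℂ (Fin n))
    (hx : x ∈ Submodule.span ℂ (obasis hH '' ↑(Finset.Iic k))) :
    eigsDesc H k * ‖x‖ ^ 2 ≤ Complex.re ⟪x, toE (H *ᵥ (x : Fin n → ℂ))⟫_ℂ := by
  rw [rayleigh_eq hH, normsq_eq_sum_ob (obasis hH), Finset.mul_sum]
  refine Finset.sum_le_sum fun t _ => ?_
  by_cases ht : t ∈ Finset.Iic k
  · exact mul_le_mul_of_nonneg_right (eigsDesc_antitone hH (Finset.mem_Iic.mp ht))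
      (sq_nonneg _)
  · rw [inner_eq_zero_of_mem_span (obasis hH) _ x hx ht]
    simp

lemma finrank_inf_ge (U V : Submodule ℂ (EuclideanSpace ℂ (Fin n))) :
    Module.finrank ℂ U + Module.finrank ℂ V
      ≤ Module.finrank ℂ ↥(U ⊓ V) + n := by
  have h := Submodule.finrank_sup_add_finrank_inf_eq U V
  have h2 : Module.finrank ℂ ↥(U ⊔ V) ≤ n := by
    simpa using Submodule.finrank_le (U ⊔ V)
  omega

lemma exists_ne_zero_of_finrank_pos {W : Submodule ℂ (EuclideanSpace ℂ (Fin n))}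
    (h : 0 < Module.finrank ℂ W) : ∃ x ∈ W, x ≠ 0 := by
  apply Submodule.exists_mem_ne_zero_of_ne_bot
  intro hbot
  rw [hbot] at h
  simp at h

lemma eigsDesc_nonneg (hP : H.PosSemidef) (t : Fin n) : 0 ≤ eigsDesc H t := by
  rw [eigsDesc_eq hP.isHermitian]
  exact hP.eigenvalues_nonneg _


lemma weyl_aux (m n : ℕ) (A B : Matrix (Fin m) (Fin n) ℂ) (k kA kB : Fin n)
    (hsum : (kA : ℕ) + (kB : ℕ) = (k : ℕ)) :
    Real.sqrt (eigsDesc ((A + B)ᴴ * (A + B)) k)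
      ≤ Real.sqrt (eigsDesc (Aᴴ * A) kA) + Real.sqrt (eigsDesc (Bᴴ * B) kB) := by
  set X := A + B with hXdef
  have hA : (Aᴴ * A).IsHermitian := (Matrix.posSemidef_conjTranspose_mul_self A).isHermitian
  have hB : (Bᴴ * B).IsHermitian := (Matrix.posSemidef_conjTranspose_mul_self B).isHermitian
  have hX : (Xᴴ * X).IsHermitian := (Matrix.posSemidef_conjTranspose_mul_self X).isHermitian
  obtain ⟨T, hT⟩ : ∃ T, T = Submodule.span ℂ (obasis hX '' ↑(Finset.Iic k)) := ⟨_, rfl⟩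
  obtain ⟨SA, hSA⟩ : ∃ S, S = Submodule.span ℂ (obasis hA '' ↑(Finset.Ici kA)) := ⟨_, rfl⟩
  obtain ⟨SB, hSB⟩ : ∃ S, S = Submodule.span ℂ (obasis hB '' ↑(Finset.Ici kB)) := ⟨_, rfl⟩
  have hdT : Module.finrank ℂ T = (k : ℕ) + 1 := by
    rw [hT, finrank_span_window, Fin.card_Iic]
  have hdA : Module.finrank ℂ SA = n - (kA : ℕ) := by
    rw [hSA, finrank_span_window, Fin.card_Ici]
  have hdB : Module.finrank ℂ SB = n - (kB : ℕ) := by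
    rw [hSB, finrank_span_window, Fin.card_Ici]
  have hkn : (k : ℕ) < n := k.isLt
  have hkAn : (kA : ℕ) < n := kA.isLt
  have hkBn : (kB : ℕ) < n := kB.isLt
  have hc1 := finrank_inf_ge T SA
  have hc2 := finrank_inf_ge (T ⊓ SA) SB
  have hpos : 0 < Module.finrank ℂ ↥(T ⊓ SA ⊓ SB) := by omega
  obtain ⟨x, hxW, hx0⟩ := exists_ne_zero_of_finrank_pos hpos
  have hxT : x ∈ T := hxW.1.1
  have hxA : x ∈ SA := hxW.1.2
  have hxB : x ∈ SB := hxW.2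
  have hN : (0 : ℝ) < ‖x‖ := norm_pos_iff.mpr hx0
  set a : ℝ := eigsDesc (Aᴴ * A) kA with ha
  set b : ℝ := eigsDesc (Bᴴ * B) kB with hb
  set c : ℝ := eigsDesc (Xᴴ * X) k with hcc
  have ha0 : 0 ≤ a := eigsDesc_nonneg (Matrix.posSemidef_conjTranspose_mul_self A) _
  have hb0 : 0 ≤ b := eigsDesc_nonneg (Matrix.posSemidef_conjTranspose_mul_self B) _
  have hc0 : 0 ≤ c := eigsDesc_nonneg (Matrix.posSemidef_conjTranspose_mul_self X) _
  have hXlow : c * ‖x‖ ^ 2 ≤ ‖toE (X *ᵥ (x : Fin n → ℂ))‖ ^ 2 := by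
    rw [normsq_mulVec]
    exact rayleigh_ge_window hX k x (hT ▸ hxT)
  have hAup : ‖toE (A *ᵥ (x : Fin n → ℂ))‖ ^ 2 ≤ a * ‖x‖ ^ 2 := by
    rw [normsq_mulVec]
    exact rayleigh_le_window hA kA x (hSA ▸ hxA)
  have hBup : ‖toE (B *ᵥ (x : Fin n → ℂ))‖ ^ 2 ≤ b * ‖x‖ ^ 2 := by
    rw [normsq_mulVec]
    exact rayleigh_le_window hB kB x (hSB ▸ hxB)
  have hAn : ‖toE (A *ᵥ (x : Fin n → ℂ))‖ ≤ Real.sqrt a * ‖x‖ := by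
    have := Real.sqrt_le_sqrt hAup
    rwa [Real.sqrt_sq (norm_nonneg _), Real.sqrt_mul ha0, Real.sqrt_sq (norm_nonneg x)] at this
  have hBn : ‖toE (B *ᵥ (x : Fin n → ℂ))‖ ≤ Real.sqrt b * ‖x‖ := by
    have := Real.sqrt_le_sqrt hBup
    rwa [Real.sqrt_sq (norm_nonneg _), Real.sqrt_mul hb0, Real.sqrt_sq (norm_nonneg x)] at this
  have hXn : Real.sqrt c * ‖x‖ ≤ ‖toE (X *ᵥ (x : Fin n → ℂ))‖ := by
    have := Real.sqrt_le_sqrt hXlow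
    rwa [Real.sqrt_sq (norm_nonneg _), Real.sqrt_mul hc0, Real.sqrt_sq (norm_nonneg x)] at this
  have htri : ‖toE (X *ᵥ (x : Fin n → ℂ))‖
      ≤ ‖toE (A *ᵥ (x : Fin n → ℂ))‖ + ‖toE (B *ᵥ (x : Fin n → ℂ))‖ := by
    have heq : toE (X *ᵥ (x : Fin n → ℂ))
        = toE (A *ᵥ (x : Fin n → ℂ)) + toE (B *ᵥ (x : Fin n → ℂ)) := by
      ext t
      simp [toE, hXdef, Matrix.add_mulVec]
    rw [heq]
    exact norm_add_le _ _
  have key : Real.sqrt c * ‖x‖ ≤ (Real.sqrt a + Real.sqrt b) * ‖x‖ := by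
    calc Real.sqrt c * ‖x‖ ≤ ‖toE (X *ᵥ (x : Fin n → ℂ))‖ := hXn
      _ ≤ ‖toE (A *ᵥ (x : Fin n → ℂ))‖ + ‖toE (B *ᵥ (x : Fin n → ℂ))‖ := htri
      _ ≤ Real.sqrt a * ‖x‖ + Real.sqrt b * ‖x‖ := add_le_add hAn hBn
      _ = (Real.sqrt a + Real.sqrt b) * ‖x‖ := by ring
  exact le_of_mul_le_mul_right (by simpa [mul_comm] using key) hN


end WeylHelpers

/-- Weyl's inequality for singular values of a sum of matrices. -/
theorem stmt2 (m n : ℕ) (A B : Matrix (Fin m) (Fin n) ℂ) (i j : ℕ)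
    (hi : 1 ≤ i) (hj : 1 ≤ j) (hij : i + j - 1 ≤ min m n) :
    singVal (A + B) ⟨i + j - 1 - 1, by omega⟩ ≤
      singVal A ⟨i - 1, by omega⟩ + singVal B ⟨j - 1, by omega⟩ := by
  have hmn : min m n ≤ n := min_le_right m n
  exact weyl_aux m n A B ⟨i + j - 1 - 1, by omega⟩ ⟨i - 1, by omega⟩ ⟨j - 1, by omega⟩
    (by simp only [Fin.val_mk]; omega)
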